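/- (Corollary 2.2) Let B ∈ ℝ^{n×n} with B_{ii} ≠ 0 for all i, and let EST^m be the generalized stochastic diagonal estimator built from m i.i.d. standard Gaussian query vectors. For any 0 < ε < 1 and 0 < δ < 1, if m ≥ (1/(ε² δ))·Σ_{i=1}^n (1 + ‖[B]_{i,:}‖₂² / B_{ii}²), then P{ ‖EST^m − diag(B)‖₂ ≤ ε·‖diag(B)‖₂ } ≥ 1 − δ. -/

import Mathlib

open MeasureTheory ProbabilityTheory

open Real Filter
open scoped ENNReal NNReal


lemma integ_pow_exp (k : ℕ) : Integrable (fun x : ℝ => x ^ k * Real.exp (-(1/2) * x ^ 2)) := by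
  have := integrable_rpow_mul_exp_neg_mul_sq (b := 1/2) (by norm_num) (s := (k : ℝ))
    (neg_one_lt_zero.trans_le (Nat.cast_nonneg k))
  simpa [Real.rpow_natCast] using this

lemma tend_top (k : ℕ) : Tendsto (fun x : ℝ => x ^ k * Real.exp (-(1/2) * x ^ 2)) atTop (nhds 0) := by
  have h := rpow_mul_exp_neg_mul_sq_isLittleO_exp_neg (b := 1/2) (by norm_num) (k : ℝ)
  have hlin : Tendsto (fun x : ℝ => -((1/2) * x)) atTop atBot :=
    tendsto_neg_atTop_atBot.comp (tendsto_id.const_mul_atTop (by norm_num))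
  have h2 : Tendsto (fun x : ℝ => Real.exp (-(1/2) * x)) atTop (nhds 0) := by
    have := Real.tendsto_exp_atBot.comp hlin
    simpa [Function.comp_def, neg_mul] using this
  have := h.isBigO.trans_tendsto h2
  simpa [Real.rpow_natCast] using this

lemma tend_bot (k : ℕ) : Tendsto (fun x : ℝ => x ^ k * Real.exp (-(1/2) * x ^ 2)) atBot (nhds 0) := by
  have h := (tend_top k).comp tendsto_neg_atBot_atTop
  have heq : (fun x : ℝ => (-x) ^ k * Real.exp (-(1/2) * (-x) ^ 2)) = fun x : ℝ => ((-1:ℝ)) ^ k * (x ^ k * Real.exp (-(1/2) * x ^ 2)) := by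
    funext x; ring_nf
  rw [Function.comp_def, heq] at h
  have h3 := h.const_mul (((-1:ℝ)) ^ k)
  simpa [← mul_assoc, ← mul_pow] using h3

noncomputable def gs (k : ℕ) : ℝ := ∫ x : ℝ, x ^ k * Real.exp (-(1/2) * x ^ 2)

lemma gs_zero : gs 0 = Real.sqrt (2 * π) := by
  have := integral_gaussian (1/2)
  simp only [gs, pow_zero, one_mul]
  rw [this, show π/(1/2) = 2*π by ring]

lemma gs_odd (k : ℕ) (hk : Odd k) : gs k = 0 := by
  have h : gs k = ∫ x : ℝ, (-x) ^ k * Real.exp (-(1/2) * (-x) ^ 2) :=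
    (MeasureTheory.integral_neg_eq_self _ _).symm
  have : (fun x : ℝ => (-x) ^ k * Real.exp (-(1/2) * (-x) ^ 2))
      = fun x : ℝ => -(x ^ k * Real.exp (-(1/2) * x ^ 2)) := by
    funext x; rw [hk.neg_pow]; ring_nf
  rw [this, integral_neg] at h
  have : gs k = -gs k := h
  linarith

lemma deriv_aux (j : ℕ) (x : ℝ) :
    HasDerivAt (fun x : ℝ => -(x ^ (j+1)) * Real.exp (-(1/2) * x ^ 2))
      (x ^ (j + 2) * Real.exp (-(1/2) * x ^ 2) - (j+1) * x ^ j * Real.exp (-(1/2) * x ^ 2)) x := by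
  have h1 : HasDerivAt (fun x : ℝ => -(x ^ (j+1))) (-((j+1) * x ^ j)) x := by
    have h := (hasDerivAt_pow (j+1) x).neg
    simp only [Nat.add_sub_cancel, Nat.cast_add, Nat.cast_one] at h
    exact h
  have h2 : HasDerivAt (fun x : ℝ => Real.exp (-(1/2) * x ^ 2)) (-x * Real.exp (-(1/2) * x ^ 2)) x := by
    have hx : HasDerivAt (fun x : ℝ => -(1/2) * x ^ 2) (-x) x := by
      simpa using ((hasDerivAt_pow 2 x).const_mul (-(1/2) : ℝ))
    simpa [mul_comm] using hx.exp
  have := h1.mul h2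
  refine this.congr_deriv ?_
  ring

lemma gs_rec (j : ℕ) : gs (j + 2) = (j + 1) * gs j := by
  have hj1 : Integrable (fun x : ℝ => ((j:ℝ)+1) * x ^ j * Real.exp (-(1/2) * x ^ 2)) := by
    have := (integ_pow_exp j).const_mul ((j:ℝ)+1)
    simpa [mul_assoc] using this
  have hint : Integrable (fun x : ℝ =>
      x ^ (j + 2) * Real.exp (-(1/2) * x ^ 2) - ((j:ℝ)+1) * x ^ j * Real.exp (-(1/2) * x ^ 2)) :=
    (integ_pow_exp (j+2)).sub hj1
  have htop : Tendsto (fun x : ℝ => -(x ^ (j+1)) * Real.exp (-(1/2) * x ^ 2)) atTop (nhds 0) := by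
    have := (tend_top (j+1)).neg
    simpa [neg_mul] using this
  have hbot : Tendsto (fun x : ℝ => -(x ^ (j+1)) * Real.exp (-(1/2) * x ^ 2)) atBot (nhds 0) := by
    have := (tend_bot (j+1)).neg
    simpa [neg_mul] using this
  have h := MeasureTheory.integral_of_hasDerivAt_of_tendsto (deriv_aux j) hint hbot htop
  rw [sub_zero] at h
  have hsub := MeasureTheory.integral_sub (integ_pow_exp (j+2)) hj1
  rw [hsub] at h
  have : ∫ x : ℝ, (↑j + 1) * x ^ j * Real.exp (-(1/2) * x ^ 2)
      = (↑j + 1) * gs j := by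
    rw [gs, ← MeasureTheory.integral_const_mul]
    congr 1; funext x; ring
  rw [this] at h
  have := sub_eq_zero.mp h
  simpa [gs] using this

lemma pdf01 (x : ℝ) : gaussianPDFReal 0 1 x = (Real.sqrt (2*π))⁻¹ * Real.exp (-(1/2) * x^2) := by
  simp only [gaussianPDFReal, NNReal.coe_one, mul_one, sub_zero]
  ring_nf

lemma gauss_eq_wd : gaussianReal 0 1 = volume.withDensity
    (fun x => ((gaussianPDFReal 0 1 x).toNNReal : ℝ≥0∞)) := by
  rw [gaussianReal_of_var_ne_zero 0 one_ne_zero]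
  rfl

lemma integral_gauss01 (g : ℝ → ℝ) :
    ∫ x, g x ∂(gaussianReal 0 1) = ∫ x, gaussianPDFReal 0 1 x * g x := by
  rw [gauss_eq_wd, integral_withDensity_eq_integral_smul₀
    (by exact (measurable_gaussianPDFReal 0 1).real_toNNReal.aemeasurable) g]
  congr 1; funext x
  rw [NNReal.smul_def, Real.coe_toNNReal _ (gaussianPDFReal_nonneg 0 1 x), smul_eq_mul]

lemma integrable_gauss01_iff (g : ℝ → ℝ) :
    Integrable g (gaussianReal 0 1) ↔ Integrable (fun x => gaussianPDFReal 0 1 x * g x) := by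
  rw [gauss_eq_wd, integrable_withDensity_iff_integrable_smul₀
    (by exact (measurable_gaussianPDFReal 0 1).real_toNNReal.aemeasurable)]
  constructor <;> intro h <;> refine h.congr (by
    filter_upwards with x
    rw [NNReal.smul_def, Real.coe_toNNReal _ (gaussianPDFReal_nonneg 0 1 x), smul_eq_mul])

lemma integrable_pow_gauss (k : ℕ) : Integrable (fun x => x ^ k) (gaussianReal 0 1) := by
  rw [integrable_gauss01_iff]
  have := (integ_pow_exp k).const_mul ((Real.sqrt (2*π))⁻¹)
  refine this.congr (by filter_upwards with x; rw [pdf01]; ring)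

lemma integral_pow_gauss (k : ℕ) :
    ∫ x, x ^ k ∂(gaussianReal 0 1) = (Real.sqrt (2*π))⁻¹ * gs k := by
  rw [integral_gauss01, gs, ← MeasureTheory.integral_const_mul]
  congr 1; funext x; rw [pdf01]; ring

lemma sqrt2pi_pos : (0:ℝ) < Real.sqrt (2*π) := Real.sqrt_pos.mpr (by positivity)

lemma gmoment0 : ∫ x, x ^ 0 ∂(gaussianReal 0 1) = 1 := by
  rw [integral_pow_gauss, gs_zero, inv_mul_cancel₀ sqrt2pi_pos.ne']
lemma gmoment1 : ∫ x, x ^ 1 ∂(gaussianReal 0 1) = 0 := by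
  rw [integral_pow_gauss, gs_odd 1 ⟨0, by norm_num⟩, mul_zero]
lemma gmoment2 : ∫ x, x ^ 2 ∂(gaussianReal 0 1) = 1 := by
  have := gs_rec 0
  rw [integral_pow_gauss, this, gs_zero, show ((0:ℕ):ℝ) + 1 = 1 by norm_num, one_mul,
    inv_mul_cancel₀ sqrt2pi_pos.ne']
lemma gmoment3 : ∫ x, x ^ 3 ∂(gaussianReal 0 1) = 0 := by
  rw [integral_pow_gauss, gs_odd 3 ⟨1, by norm_num⟩, mul_zero]
lemma gmoment4 : ∫ x, x ^ 4 ∂(gaussianReal 0 1) = 3 := by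
  have h2 := gs_rec 2
  have h0 := gs_rec 0
  rw [integral_pow_gauss, h2, h0, gs_zero]
  rw [show ((2:ℕ):ℝ) + 1 = 3 by norm_num, show ((0:ℕ):ℝ) + 1 = 1 by norm_num, one_mul,
    show (√(2*π))⁻¹ * (3 * √(2*π)) = 3 * ((√(2*π))⁻¹ * √(2*π)) by ring,
    inv_mul_cancel₀ sqrt2pi_pos.ne', mul_one]

lemma pi_integral_prod {ι α : Type*} [Fintype ι] [MeasurableSpace α] (μ : Measure α)
    [SigmaFinite μ] (f : ι → α → ℝ) :
    ∫ x : ι → α, ∏ i, f i (x i) ∂(Measure.pi fun _ => μ) = ∏ i, ∫ x, f i x ∂μ := by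
  letI : MeasureSpace α := ⟨μ⟩
  exact MeasureTheory.integral_fintype_prod_eq_prod f

lemma pi_integrable_prod {ι α : Type*} [Fintype ι] [MeasurableSpace α] (μ : Measure α)
    [SigmaFinite μ] (f : ι → α → ℝ) (hf : ∀ i, Integrable (f i) μ) :
    Integrable (fun x : ι → α => ∏ i, f i (x i)) (Measure.pi fun _ => μ) := by
  letI : MeasureSpace α := ⟨μ⟩
  exact MeasureTheory.Integrable.fintype_prod hf

section NuLayer
variable {n : ℕ}

noncomputable abbrev gmu : Measure ℝ := gaussianReal 0 1
noncomputable abbrev gnu (n : ℕ) : Measure (Fin n → ℝ) := Measure.pi fun _ : Fin n => gmu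

lemma prod_if_pow (y : Fin n → ℝ) (i : Fin n) (a : ℕ) :
    ∏ t, y t ^ (if t = i then a else 0) = y i ^ a := by
  rw [Finset.prod_eq_single i (fun t _ ht => by simp [ht]) (by simp)]
  simp

lemma integ_mono (e : Fin n → ℕ) :
    Integrable (fun y : Fin n → ℝ => ∏ t, y t ^ e t) (gnu n) :=
  pi_integrable_prod _ _ (fun t => integrable_pow_gauss (e t))

lemma int_mono (e : Fin n → ℕ) :
    ∫ y : Fin n → ℝ, ∏ t, y t ^ e t ∂(gnu n) = ∏ t, ∫ x, x ^ e t ∂gmu :=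
  pi_integral_prod _ _

-- single-index monomials
lemma integ_sq (i : Fin n) : Integrable (fun y : Fin n → ℝ => y i ^ 2) (gnu n) := by
  have := integ_mono (fun t => if t = i then 2 else 0)
  refine this.congr (by filter_upwards with y; rw [prod_if_pow])

lemma int_sq (i : Fin n) : ∫ y : Fin n → ℝ, y i ^ 2 ∂(gnu n) = 1 := by
  have h := int_mono (fun t => if t = i then 2 else 0)
  simp only [prod_if_pow] at h
  rw [h, Finset.prod_eq_one]
  intro t _
  by_cases ht : t = i <;> simp [ht, gmoment2, gmoment0]

lemma integ_quart (i : Fin n) : Integrable (fun y : Fin n → ℝ => y i ^ 4) (gnu n) := by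
  have := integ_mono (fun t => if t = i then 4 else 0)
  refine this.congr (by filter_upwards with y; rw [prod_if_pow])

lemma int_quart (i : Fin n) : ∫ y : Fin n → ℝ, y i ^ 4 ∂(gnu n) = 3 := by
  have h := int_mono (fun t => if t = i then 4 else 0)
  simp only [prod_if_pow] at h
  rw [h, Finset.prod_eq_single i (fun t _ ht => by simp [ht, gmoment0]) (by simp)]
  simp [gmoment4]

lemma prod_if_pow2 (y : Fin n → ℝ) {i j : Fin n} (h : i ≠ j) (a b : ℕ) :
    ∏ t, y t ^ ((if t = i then a else 0) + (if t = j then b else 0)) = y i ^ a * y j ^ b := by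
  simp only [pow_add, Finset.prod_mul_distrib, prod_if_pow]

lemma integ_pair {i j : Fin n} (h : i ≠ j) (a b : ℕ) :
    Integrable (fun y : Fin n → ℝ => y i ^ a * y j ^ b) (gnu n) := by
  have := integ_mono (fun t => (if t = i then a else 0) + (if t = j then b else 0))
  refine this.congr (by filter_upwards with y; rw [prod_if_pow2 y h])

lemma int_pair {i j : Fin n} (h : i ≠ j) (a b : ℕ) :
    ∫ y : Fin n → ℝ, y i ^ a * y j ^ b ∂(gnu n)
      = (∫ x, x ^ a ∂gmu) * (∫ x, x ^ b ∂gmu) := by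
  have heq := int_mono (fun t => (if t = i then a else 0) + (if t = j then b else 0))
  simp only [prod_if_pow2 _ h] at heq
  rw [heq]
  have hji : j ≠ i := h.symm
  rw [← Finset.mul_prod_erase _ _ (Finset.mem_univ i),
    ← Finset.mul_prod_erase _ _ (Finset.mem_erase.mpr ⟨hji, Finset.mem_univ j⟩)]
  have h1 : ∏ t ∈ (Finset.univ.erase i).erase j,
      (∫ x, x ^ ((if t = i then a else 0) + (if t = j then b else 0)) ∂gmu) = 1 := by
    apply Finset.prod_eq_one
    intro t ht
    have h2 := Finset.mem_erase.mp ht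
    have h3 := Finset.mem_erase.mp h2.2
    simp [h2.1, h3.1, gmoment0]
  rw [h1, if_pos rfl, if_neg h, if_neg hji, if_pos rfl]
  simp

lemma int_mul_zero {i j : Fin n} (h : i ≠ j) :
    ∫ y : Fin n → ℝ, y i ^ 1 * y j ^ 1 ∂(gnu n) = 0 := by
  rw [int_pair h, gmoment1, zero_mul]

lemma int_sq_sq {i j : Fin n} (h : i ≠ j) :
    ∫ y : Fin n → ℝ, y i ^ 2 * y j ^ 2 ∂(gnu n) = 1 := by
  rw [int_pair h, gmoment2, one_mul]

lemma int_cube_mul {i j : Fin n} (h : i ≠ j) :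
    ∫ y : Fin n → ℝ, y i ^ 3 * y j ^ 1 ∂(gnu n) = 0 := by
  rw [int_pair h, gmoment3, zero_mul]

lemma prod_if_pow3 (y : Fin n → ℝ) (i j j' : Fin n) :
    ∏ t, y t ^ ((if t = i then 2 else 0) + (if t = j then 1 else 0) + (if t = j' then 1 else 0))
      = y i ^ 2 * y j * y j' := by
  simp only [pow_add, Finset.prod_mul_distrib, prod_if_pow, pow_one]

lemma integ_triple (i j j' : Fin n) :
    Integrable (fun y : Fin n → ℝ => y i ^ 2 * y j * y j') (gnu n) := by
  have := integ_mono (fun t =>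
    (if t = i then 2 else 0) + (if t = j then 1 else 0) + (if t = j' then 1 else 0))
  refine this.congr (by filter_upwards with y; rw [prod_if_pow3])

lemma int_triple_zero {i j j' : Fin n} (hjj : j ≠ j') (hij : i ≠ j) :
    ∫ y : Fin n → ℝ, y i ^ 2 * y j * y j' ∂(gnu n) = 0 := by
  have heq := int_mono (fun t =>
    (if t = i then 2 else 0) + (if t = j then 1 else 0) + (if t = j' then 1 else 0))
  simp only [prod_if_pow3] at heq
  rw [heq, Finset.prod_eq_zero (Finset.mem_univ j)]
  have h1 := gmoment1
  simp only [pow_one] at h1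
  simp [hij.symm, hjj, h1]
end NuLayer

section ZLayer
variable {n : ℕ} (B : Matrix (Fin n) (Fin n) ℝ)

lemma integ_yiyj (i j : Fin n) : Integrable (fun y : Fin n → ℝ => y i * y j) (gnu n) := by
  by_cases h : i = j
  · subst h
    exact (integ_sq i).congr (by filter_upwards with y; ring)
  · exact (integ_pair h 1 1).congr (by filter_upwards with y; ring)

lemma int_yiyj (i j : Fin n) :
    ∫ y : Fin n → ℝ, y i * y j ∂(gnu n) = if i = j then 1 else 0 := by
  by_cases h : i = j
  · subst h
    rw [if_pos rfl, ← int_sq i]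
    exact integral_congr_ae (by filter_upwards with y; ring)
  · rw [if_neg h, ← int_mul_zero h]
    exact integral_congr_ae (by filter_upwards with y; ring)

lemma integ_u (i j j' : Fin n) :
    Integrable (fun y : Fin n → ℝ => (y i * y j) * (y i * y j')) (gnu n) :=
  (integ_triple i j j').congr (by filter_upwards with y; ring)

lemma int_u (i j j' : Fin n) :
    ∫ y : Fin n → ℝ, (y i * y j) * (y i * y j') ∂(gnu n)
      = if j = j' then (if i = j then 3 else 1) else 0 := by
  by_cases hjj : j = j'
  · subst hjj
    rw [if_pos rfl]
    by_cases hij : i = j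
    · subst hij
      rw [if_pos rfl, ← int_quart i]
      exact integral_congr_ae (by filter_upwards with y; ring)
    · rw [if_neg hij, ← int_sq_sq hij]
      exact integral_congr_ae (by filter_upwards with y; ring)
  · rw [if_neg hjj]
    by_cases hij : i = j
    · subst hij
      have hij' : i ≠ j' := hjj
      rw [← int_cube_mul hij']
      exact integral_congr_ae (by filter_upwards with y; ring)
    · by_cases hij' : i = j'
      · subst hij'
        have h2 : i ≠ j := hij
        rw [← int_cube_mul h2]
        exact integral_congr_ae (by filter_upwards with y; ring)
      · rw [← int_triple_zero hjj hij]
        exact integral_congr_ae (by filter_upwards with y; ring)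

-- the centered single-sample function
noncomputable def Zf (i : Fin n) : (Fin n → ℝ) → ℝ :=
  fun y => (∑ j, B i j * (y i * y j)) - B i i

lemma Zf_eq (i : Fin n) (y : Fin n → ℝ) :
    Zf B i y = y i * Matrix.mulVec B y i - B i i := by
  simp only [Zf, Matrix.mulVec, dotProduct, Finset.mul_sum]
  congr 1
  exact Finset.sum_congr rfl (fun j _ => by ring)

lemma integ_S (i : Fin n) :
    Integrable (fun y : Fin n → ℝ => ∑ j, B i j * (y i * y j)) (gnu n) :=
  integrable_finset_sum _ (fun j _ => (integ_yiyj i j).const_mul _)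

lemma int_S (i : Fin n) :
    ∫ y : Fin n → ℝ, ∑ j, B i j * (y i * y j) ∂(gnu n) = B i i := by
  rw [integral_finset_sum _ (fun j _ => (integ_yiyj i j).const_mul _)]
  have : ∀ j : Fin n, ∫ y : Fin n → ℝ, B i j * (y i * y j) ∂(gnu n)
      = B i j * (if i = j then 1 else 0) := by
    intro j; rw [MeasureTheory.integral_const_mul, int_yiyj]
  simp only [this, mul_ite, mul_one, mul_zero]
  simp

lemma integ_Zf (i : Fin n) : Integrable (Zf B i) (gnu n) :=
  (integ_S B i).sub (integrable_const _)

lemma int_Zf (i : Fin n) : ∫ y, Zf B i y ∂(gnu n) = 0 := by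
  simp only [Zf]
  rw [integral_sub (integ_S B i) (integrable_const _), int_S, integral_const]
  simp

lemma integ_SS (i : Fin n) :
    Integrable (fun y : Fin n → ℝ =>
      (∑ j, B i j * (y i * y j)) * (∑ j, B i j * (y i * y j))) (gnu n) := by
  have h : ∀ y : Fin n → ℝ, (∑ j, B i j * (y i * y j)) * (∑ j, B i j * (y i * y j))
      = ∑ j, ∑ j', (B i j * B i j') * ((y i * y j) * (y i * y j')) := by
    intro y
    rw [Finset.sum_mul_sum]
    exact Finset.sum_congr rfl (fun j _ => Finset.sum_congr rfl (fun j' _ => by ring))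
  have h1 : Integrable (fun y : Fin n → ℝ =>
      ∑ j, ∑ j', (B i j * B i j') * ((y i * y j) * (y i * y j'))) (gnu n) :=
    integrable_finset_sum _ (fun j _ => integrable_finset_sum _
      (fun j' _ => (integ_u i j j').const_mul (B i j * B i j')))
  exact h1.congr (Filter.Eventually.of_forall (fun y => (h y).symm))

lemma int_SS (i : Fin n) :
    ∫ y : Fin n → ℝ, (∑ j, B i j * (y i * y j)) * (∑ j, B i j * (y i * y j)) ∂(gnu n)
      = (∑ j, B i j ^ 2) + 2 * B i i ^ 2 := by
  have h : ∀ y : Fin n → ℝ, (∑ j, B i j * (y i * y j)) * (∑ j, B i j * (y i * y j))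
      = ∑ j, ∑ j', (B i j * B i j') * ((y i * y j) * (y i * y j')) := by
    intro y
    rw [Finset.sum_mul_sum]
    exact Finset.sum_congr rfl (fun j _ => Finset.sum_congr rfl (fun j' _ => by ring))
  rw [integral_congr_ae (Filter.Eventually.of_forall h),
    integral_finset_sum _ (fun j _ => integrable_finset_sum _
      (fun j' _ => (integ_u i j j').const_mul (B i j * B i j')))]
  have h2 : ∀ j, ∫ y : Fin n → ℝ, ∑ j', (B i j * B i j') * ((y i * y j) * (y i * y j')) ∂(gnu n)
      = B i j ^ 2 * (if i = j then 3 else 1) := by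
    intro j
    rw [integral_finset_sum _ (fun j' _ => (integ_u i j j').const_mul _)]
    have : ∀ j' : Fin n, ∫ y : Fin n → ℝ, (B i j * B i j') * ((y i * y j) * (y i * y j')) ∂(gnu n)
        = (B i j * B i j') * (if j = j' then (if i = j then 3 else 1) else 0) := by
      intro j'; rw [MeasureTheory.integral_const_mul, int_u]
    simp only [this]
    rw [Finset.sum_eq_single j (fun j' _ hne => by simp [Ne.symm hne])
      (fun habs => absurd (Finset.mem_univ j) habs)]
    simp [pow_two]
  simp only [h2]
  have h3 : ∀ j : Fin n, B i j ^ 2 * (if i = j then 3 else 1)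
      = B i j ^ 2 + (if i = j then 2 * B i j ^ 2 else 0) := by
    intro j; by_cases hij : i = j <;> simp [hij] <;> ring
  rw [Finset.sum_congr rfl (fun j _ => h3 j), Finset.sum_add_distrib,
    Finset.sum_ite_eq Finset.univ i (fun j => 2 * B i j ^ 2)]
  simp only [Finset.mem_univ, if_true]

lemma integ_Zfsq (i : Fin n) :
    Integrable (fun y => Zf B i y * Zf B i y) (gnu n) := by
  have h : ∀ y : Fin n → ℝ, Zf B i y * Zf B i y
      = ((∑ j, B i j * (y i * y j)) * (∑ j, B i j * (y i * y j))
        - 2 * B i i * (∑ j, B i j * (y i * y j))) + B i i ^ 2 := by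
    intro y; simp only [Zf]; ring
  have h1 : Integrable (fun y : Fin n → ℝ =>
      ((∑ j, B i j * (y i * y j)) * (∑ j, B i j * (y i * y j))
        - 2 * B i i * (∑ j, B i j * (y i * y j))) + B i i ^ 2) (gnu n) :=
    ((integ_SS B i).sub ((integ_S B i).const_mul (2 * B i i))).add (integrable_const _)
  exact h1.congr (Filter.Eventually.of_forall (fun y => (h y).symm))

lemma int_Zfsq (i : Fin n) :
    ∫ y, Zf B i y * Zf B i y ∂(gnu n) = B i i ^ 2 + ∑ j, B i j ^ 2 := by
  have h : ∀ y : Fin n → ℝ, Zf B i y * Zf B i y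
      = ((∑ j, B i j * (y i * y j)) * (∑ j, B i j * (y i * y j))
        - 2 * B i i * (∑ j, B i j * (y i * y j))) + B i i ^ 2 := by
    intro y; simp only [Zf]; ring
  have hsub : Integrable (fun y : Fin n → ℝ =>
      (∑ j, B i j * (y i * y j)) * (∑ j, B i j * (y i * y j))
        - 2 * B i i * (∑ j, B i j * (y i * y j))) (gnu n) :=
    (integ_SS B i).sub ((integ_S B i).const_mul (2 * B i i))
  have hconstmul : Integrable (fun y : Fin n → ℝ =>
      2 * B i i * (∑ j, B i j * (y i * y j))) (gnu n) :=
    (integ_S B i).const_mul (2 * B i i)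
  rw [integral_congr_ae (Filter.Eventually.of_forall h),
    integral_add hsub (integrable_const _),
    integral_sub (integ_SS B i) hconstmul,
    int_SS, MeasureTheory.integral_const_mul, int_S, integral_const]
  simp
  ring

end ZLayer

section MLayer
variable {n m : ℕ} (B : Matrix (Fin n) (Fin n) ℝ)

noncomputable abbrev gP (m n : ℕ) : Measure (Fin m → Fin n → ℝ) :=
  Measure.pi fun _ : Fin m => gnu n

lemma prod_if_fun {α : Type*} (x : Fin m → α) (k : Fin m) (F : α → ℝ) :
    ∏ k', (if k' = k then F (x k') else 1) = F (x k) := by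
  rw [Finset.prod_eq_single k (fun t _ ht => by simp [ht]) (by simp)]
  simp

lemma prodZZ (i : Fin n) (k l : Fin m) (x : Fin m → Fin n → ℝ) :
    ∏ k', ((if k' = k then Zf B i (x k') else 1) * (if k' = l then Zf B i (x k') else 1))
      = Zf B i (x k) * Zf B i (x l) := by
  rw [Finset.prod_mul_distrib, prod_if_fun, prod_if_fun]

lemma integ_fac (i : Fin n) (k l : Fin m) (k' : Fin m) :
    Integrable (fun y : Fin n → ℝ =>
      (if k' = k then Zf B i y else 1) * (if k' = l then Zf B i y else 1)) (gnu n) := by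
  by_cases h1 : k' = k
  · subst h1
    by_cases h2 : k' = l
    · subst h2
      simpa using integ_Zfsq B i
    · simpa [h2] using integ_Zf B i
  · by_cases h2 : k' = l
    · subst h2
      simpa [h1] using integ_Zf B i
    · simpa [h1, h2] using integrable_const (1:ℝ)

lemma int_fac_one (i : Fin n) (k l : Fin m) (k' : Fin m) (h1 : k' ≠ k) (h2 : k' ≠ l) :
    ∫ y, ((if k' = k then Zf B i y else 1) * (if k' = l then Zf B i y else 1)) ∂(gnu n) = 1 := by
  simp [h1, h2]

lemma integ_ZZ (i : Fin n) (k l : Fin m) :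
    Integrable (fun x : Fin m → Fin n → ℝ => Zf B i (x k) * Zf B i (x l)) (gP m n) := by
  have h1 := pi_integrable_prod (gnu n)
    (fun k' y => (if k' = k then Zf B i y else 1) * (if k' = l then Zf B i y else 1))
    (integ_fac B i k l)
  exact h1.congr (Filter.Eventually.of_forall (fun x => by simp only [prodZZ]))

lemma int_ZZ (i : Fin n) (k l : Fin m) :
    ∫ x, Zf B i (x k) * Zf B i (x l) ∂(gP m n)
      = if k = l then B i i ^ 2 + ∑ j, B i j ^ 2 else 0 := by
  have h1 := pi_integral_prod (gnu n)
    (fun k' y => (if k' = k then Zf B i y else 1) * (if k' = l then Zf B i y else 1))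
  have h2 : ∫ x, Zf B i (x k) * Zf B i (x l) ∂(gP m n)
      = ∏ k', ∫ y, ((if k' = k then Zf B i y else 1) * (if k' = l then Zf B i y else 1))
          ∂(gnu n) := by
    rw [← h1]
    exact integral_congr_ae (Filter.Eventually.of_forall (fun x => by simp only [prodZZ]))
  rw [h2]
  by_cases hkl : k = l
  · subst hkl
    rw [if_pos rfl, Finset.prod_eq_single k
      (fun t _ ht => int_fac_one B i k k t ht ht) (by simp)]
    simp only [if_pos rfl]
    have := int_Zfsq B i
    simpa using this
  · rw [if_neg hkl, Finset.prod_eq_zero (Finset.mem_univ k)]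
    simp only [if_pos rfl, if_neg hkl, mul_one]
    exact int_Zf B i

lemma integ_sumZ_sq (i : Fin n) :
    Integrable (fun x : Fin m → Fin n → ℝ => (∑ k, Zf B i (x k)) ^ 2) (gP m n) := by
  have h1 : Integrable (fun x : Fin m → Fin n → ℝ =>
      ∑ k, ∑ l, Zf B i (x k) * Zf B i (x l)) (gP m n) :=
    integrable_finset_sum _ (fun k _ => integrable_finset_sum _ (fun l _ => integ_ZZ B i k l))
  exact h1.congr (Filter.Eventually.of_forall (fun x => by
    beta_reduce
    rw [pow_two, Finset.sum_mul_sum]))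

lemma int_sumZ_sq (i : Fin n) :
    ∫ x : Fin m → Fin n → ℝ, (∑ k, Zf B i (x k)) ^ 2 ∂(gP m n)
      = m * (B i i ^ 2 + ∑ j, B i j ^ 2) := by
  have hexp : ∀ x : Fin m → Fin n → ℝ, (∑ k, Zf B i (x k)) ^ 2
      = ∑ k, ∑ l, Zf B i (x k) * Zf B i (x l) := by
    intro x; rw [pow_two, Finset.sum_mul_sum]
  rw [integral_congr_ae (Filter.Eventually.of_forall hexp),
    integral_finset_sum _ (fun k _ => integrable_finset_sum _ (fun l _ => integ_ZZ B i k l))]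
  have : ∀ k : Fin m, ∫ x, ∑ l, Zf B i (x k) * Zf B i (x l) ∂(gP m n)
      = B i i ^ 2 + ∑ j, B i j ^ 2 := by
    intro k
    rw [integral_finset_sum _ (fun l _ => integ_ZZ B i k l)]
    simp only [int_ZZ]
    rw [Finset.sum_eq_single k (fun l _ hne => by simp [Ne.symm hne]) (by simp)]
    simp
  simp only [this, Finset.sum_const, Finset.card_univ, Fintype.card_fin, nsmul_eq_mul]

end MLayer

/-- Corollary 2.2: if
`m ≥ (1/(ε²δ)) Σ_i (1 + ‖[B]_{i,:}‖₂²/B_{ii}²)` then the generalized stochastic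
diagonal estimator `EST^m := (1/m) Σ_k ω^{(k)} ⊙ (B ω^{(k)})` satisfies
`P{‖EST^m − diag B‖₂ ≤ ε‖diag B‖₂} ≥ 1 − δ`. -/
theorem stmt_5 (n m : ℕ) (B : Matrix (Fin n) (Fin n) ℝ)
    (hB : ∀ i, B i i ≠ 0) (ε δ : ℝ) (hε0 : 0 < ε) (hε1 : ε < 1) (hδ0 : 0 < δ) (hδ1 : δ < 1)
    (hm : (1 / (ε ^ 2 * δ)) * (∑ i, (1 + (∑ j, B i j ^ 2) / B i i ^ 2)) ≤ (m : ℝ))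
    (P : Measure (Fin m → Fin n → ℝ))
    (hP : P = Measure.pi fun _ : Fin m => Measure.pi fun _ : Fin n => gaussianReal 0 1) :
    ENNReal.ofReal (1 - δ)
      ≤ P {x | Real.sqrt (∑ i, ((1 / (m : ℝ)) * (∑ k, x k i * B.mulVec (x k) i) - B i i) ^ 2)
                ≤ ε * Real.sqrt (∑ i, B i i ^ 2)} := by
  subst hP
  have hPP : IsProbabilityMeasure (gP m n) := inferInstance
  rcases Nat.eq_zero_or_pos n with hn | hn
  · subst hn
    have hset : {x : Fin m → Fin 0 → ℝ |
        Real.sqrt (∑ i, ((1 / (m : ℝ)) * (∑ k, x k i * B.mulVec (x k) i) - B i i) ^ 2)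
          ≤ ε * Real.sqrt (∑ i, B i i ^ 2)} = Set.univ := by
      ext x
      simp
    rw [hset, measure_univ]
    exact ENNReal.ofReal_le_one.mpr (by linarith)
  -- main case
  haveI : Nonempty (Fin n) := ⟨⟨0, hn⟩⟩
  set D : ℝ := ∑ i, B i i ^ 2 with hD
  set R : Fin n → ℝ := fun i => ∑ j, B i j ^ 2 with hR
  have hBsq : ∀ i : Fin n, 0 < B i i ^ 2 := fun i =>
    lt_of_le_of_ne (sq_nonneg _) (Ne.symm (pow_ne_zero 2 (hB i)))
  have hDpos : 0 < D := Finset.sum_pos (fun i _ => hBsq i) Finset.univ_nonempty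
  have hRnn : ∀ i, 0 ≤ R i := fun i => Finset.sum_nonneg (fun j _ => sq_nonneg _)
  have hW : ∀ i : Fin n, (0:ℝ) < 1 + R i / B i i ^ 2 := fun i => by
    have : 0 ≤ R i / B i i ^ 2 := div_nonneg (hRnn i) (hBsq i).le
    linarith
  have hmR : 0 < (m : ℝ) := by
    refine lt_of_lt_of_le ?_ hm
    have h1 : 0 < ∑ i, (1 + R i / B i i ^ 2) := Finset.sum_pos (fun i _ => hW i) Finset.univ_nonempty
    positivity
  have hmne : (m : ℝ) ≠ 0 := hmR.ne'
  set g : (Fin m → Fin n → ℝ) → ℝ :=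
    fun x => ∑ i, ((1 / (m : ℝ)) * (∑ k, x k i * Matrix.mulVec B (x k) i) - B i i) ^ 2 with hg
  have hkey : ∀ (x : Fin m → Fin n → ℝ) (i : Fin n),
      (1 / (m : ℝ)) * (∑ k, x k i * Matrix.mulVec B (x k) i) - B i i
        = (1 / (m : ℝ)) * ∑ k, Zf B i (x k) := by
    intro x i
    have h1 : ∑ k, Zf B i (x k) = (∑ k, x k i * Matrix.mulVec B (x k) i) - m * B i i := by
      rw [Finset.sum_congr rfl (fun k _ => Zf_eq B i (x k)), Finset.sum_sub_distrib]
      simp [Finset.sum_const]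
    rw [h1, mul_sub]
    congr 1
    field_simp
  have hgx : ∀ x, g x = ∑ i, (1 / (m : ℝ)) ^ 2 * (∑ k, Zf B i (x k)) ^ 2 := by
    intro x
    refine Finset.sum_congr rfl (fun i _ => ?_)
    rw [hkey x i, mul_pow]
  have hgint : Integrable g (gP m n) := by
    have h1 : Integrable (fun x : Fin m → Fin n → ℝ =>
        ∑ i, (1 / (m : ℝ)) ^ 2 * (∑ k, Zf B i (x k)) ^ 2) (gP m n) :=
      integrable_finset_sum _ (fun i _ => (integ_sumZ_sq B i).const_mul _)
    exact h1.congr (Filter.Eventually.of_forall (fun x => (hgx x).symm))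
  set V : ℝ := ∑ i, (B i i ^ 2 + R i) with hV
  have hEg : ∫ x, g x ∂(gP m n) = (1 / (m : ℝ)) * V := by
    rw [integral_congr_ae (Filter.Eventually.of_forall hgx),
      integral_finset_sum _ (fun i _ => (integ_sumZ_sq B i).const_mul _)]
    have h2 : ∀ i : Fin n, ∫ x, (1 / (m : ℝ)) ^ 2 * (∑ k, Zf B i (x k)) ^ 2 ∂(gP m n)
        = (1 / (m : ℝ)) * (B i i ^ 2 + R i) := by
      intro i
      rw [MeasureTheory.integral_const_mul, int_sumZ_sq]
      field_simp
      ring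
    rw [Finset.sum_congr rfl (fun i _ => h2 i), ← Finset.mul_sum]
  set t : ℝ := ε ^ 2 * D with ht
  have htpos : 0 < t := by positivity
  -- Markov
  have hg0 : 0 ≤ᵐ[gP m n] g :=
    Filter.Eventually.of_forall (fun x => Finset.sum_nonneg (fun i _ => sq_nonneg _))
  have hmar := mul_meas_ge_le_integral_of_nonneg hg0 hgint t
  have harith : (1 / (m : ℝ)) * V ≤ δ * t := by
    have hε2δ : (0:ℝ) < ε ^ 2 * δ := by positivity
    have hWm : (∑ i, (1 + R i / B i i ^ 2)) ≤ (m : ℝ) * (ε ^ 2 * δ) := by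
      have h := mul_le_mul_of_nonneg_right hm hε2δ.le
      calc (∑ i, (1 + R i / B i i ^ 2))
          = 1 / (ε ^ 2 * δ) * (∑ i, (1 + R i / B i i ^ 2)) * (ε ^ 2 * δ) := by
            field_simp
        _ ≤ (m : ℝ) * (ε ^ 2 * δ) := h
    have hVW : V ≤ (∑ i, (1 + R i / B i i ^ 2)) * D := by
      rw [Finset.sum_mul]
      refine Finset.sum_le_sum (fun i _ => ?_)
      have hBD : B i i ^ 2 ≤ D := Finset.single_le_sum (fun j _ => sq_nonneg (B j j)) (Finset.mem_univ i)
      have h3 : R i ≤ R i / B i i ^ 2 * D := by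
        have h4 : R i = R i / B i i ^ 2 * B i i ^ 2 :=
          (div_mul_cancel₀ (R i) (hBsq i).ne').symm
        calc R i = R i / B i i ^ 2 * B i i ^ 2 := h4
          _ ≤ R i / B i i ^ 2 * D :=
            mul_le_mul_of_nonneg_left hBD (div_nonneg (hRnn i) (hBsq i).le)
      have : (1 + R i / B i i ^ 2) * D = D + R i / B i i ^ 2 * D := by ring
      rw [this]
      linarith
    have h5 : V ≤ (m : ℝ) * (ε ^ 2 * δ) * D :=
      hVW.trans (mul_le_mul_of_nonneg_right hWm hDpos.le)
    rw [ht]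
    rw [div_mul_eq_mul_div, one_mul, div_le_iff₀ hmR]
    calc V ≤ (m : ℝ) * (ε ^ 2 * δ) * D := h5
      _ = δ * (ε ^ 2 * D) * m := by ring
  have hmeas_le : gP m n {x | t < g x} ≤ ENNReal.ofReal δ := by
    have hfin : gP m n {x | t ≤ g x} ≠ ⊤ := measure_ne_top _ _
    have h6 : ((gP m n) {x | t < g x}).toReal ≤ ((gP m n) {x | t ≤ g x}).toReal :=
      ENNReal.toReal_mono hfin (measure_mono (Set.setOf_subset_setOf.mpr (fun x hx => le_of_lt hx)))
    have h7 : ((gP m n) {x | t ≤ g x}).toReal ≤ (∫ x, g x ∂(gP m n)) / t := by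
      rw [le_div_iff₀ htpos]
      calc ((gP m n) {x | t ≤ g x}).toReal * t
          = t * ((gP m n) {x | t ≤ g x}).toReal := by ring
        _ ≤ ∫ x, g x ∂(gP m n) := hmar
    have h8 : (∫ x, g x ∂(gP m n)) / t ≤ δ := by
      rw [hEg, div_le_iff₀ htpos]
      calc (1 / (m : ℝ)) * V ≤ δ * t := harith
        _ = δ * t := rfl
    have h9 : ((gP m n) {x | t < g x}).toReal ≤ δ := le_trans h6 (le_trans h7 h8)
    calc gP m n {x | t < g x}
        = ENNReal.ofReal ((gP m n {x | t < g x}).toReal) :=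
          (ENNReal.ofReal_toReal (measure_ne_top _ _)).symm
      _ ≤ ENNReal.ofReal δ := ENNReal.ofReal_le_ofReal h9
  have hunion : (1 : ℝ≥0∞) ≤ gP m n {x | g x ≤ t} + gP m n {x | t < g x} := by
    have hcov : (Set.univ : Set (Fin m → Fin n → ℝ)) ⊆ {x | g x ≤ t} ∪ {x | t < g x} :=
      fun x _ => le_or_gt (g x) t
    calc (1 : ℝ≥0∞) = gP m n Set.univ := measure_univ.symm
      _ ≤ gP m n ({x | g x ≤ t} ∪ {x | t < g x}) := measure_mono hcov
      _ ≤ gP m n {x | g x ≤ t} + gP m n {x | t < g x} := measure_union_le _ _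
  have hlb : (1 : ℝ≥0∞) - ENNReal.ofReal δ ≤ gP m n {x | g x ≤ t} := by
    refine tsub_le_iff_right.mpr ?_
    exact hunion.trans (add_le_add_right hmeas_le _)
  have hincl : {x | g x ≤ t} ⊆ {x : Fin m → Fin n → ℝ |
      Real.sqrt (∑ i, ((1 / (m : ℝ)) * (∑ k, x k i * Matrix.mulVec B (x k) i) - B i i) ^ 2)
        ≤ ε * Real.sqrt D} := by
    intro x hx
    have h10 : Real.sqrt (g x) ≤ Real.sqrt t := Real.sqrt_le_sqrt hx
    have h11 : Real.sqrt t = ε * Real.sqrt D := by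
      rw [ht, Real.sqrt_mul (sq_nonneg ε), Real.sqrt_sq hε0.le]
    exact le_trans h10 (le_of_eq h11)
  calc ENNReal.ofReal (1 - δ) = 1 - ENNReal.ofReal δ := by
        rw [ENNReal.ofReal_sub 1 hδ0.le, ENNReal.ofReal_one]
    _ ≤ gP m n {x | g x ≤ t} := hlb
    _ ≤ _ := measure_mono hincl
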